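/- For m ≥ 1 and a real parameter x > 0, define g_{m-1}(z) = Σ_{k=0}^{m-1} z^k x^{m-1-k}. Then for all z > 0, the quantity T_m(z) := (z·g_{m-1}'(z))' · g_{m-1}(z) − z·(g_{m-1}'(z))² is nonnegative. -/

import Mathlib

/-- For `g_{m-1}(z) = Σ_{k=0}^{m-1} z^k x^{m-1-k}` with `x > 0`,
the quantity `T_m(z) = (z g'(z))' g(z) - z (g'(z))²` is nonnegative for all `z > 0`. -/
theorem stmt_2 (m : ℕ) (hm : 1 ≤ m) (x : ℝ) (hx : 0 < x) (z : ℝ) (hz : 0 < z) :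
    0 ≤
      deriv (fun t : ℝ =>
          t * deriv (fun s : ℝ => ∑ k ∈ Finset.range m, s ^ k * x ^ (m - 1 - k)) t) z *
        (∑ k ∈ Finset.range m, z ^ k * x ^ (m - 1 - k)) -
      z * (deriv (fun s : ℝ => ∑ k ∈ Finset.range m, s ^ k * x ^ (m - 1 - k)) z) ^ 2 := by
  -- derivative of g
  have hg : ∀ t : ℝ, HasDerivAt (fun s : ℝ => ∑ k ∈ Finset.range m, s ^ k * x ^ (m - 1 - k))
      (∑ k ∈ Finset.range m, (k : ℝ) * t ^ (k - 1) * x ^ (m - 1 - k)) t := by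
    intro t
    apply HasDerivAt.fun_sum
    intro k _
    simpa [mul_comm, mul_assoc] using (hasDerivAt_pow k t).mul_const (x ^ (m - 1 - k))
  have hderiv : deriv (fun s : ℝ => ∑ k ∈ Finset.range m, s ^ k * x ^ (m - 1 - k)) =
      fun t => ∑ k ∈ Finset.range m, (k : ℝ) * t ^ (k - 1) * x ^ (m - 1 - k) := by
    funext t; exact (hg t).deriv
  rw [hderiv]
  have hfun : (fun t : ℝ => t * ∑ k ∈ Finset.range m, (k : ℝ) * t ^ (k - 1) * x ^ (m - 1 - k)) =
      fun t => ∑ k ∈ Finset.range m, (k : ℝ) * t ^ k * x ^ (m - 1 - k) := by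
    funext t
    rw [Finset.mul_sum]
    refine Finset.sum_congr rfl fun k _ => ?_
    cases k with
    | zero => simp
    | succ n => simp [pow_succ]; ring
  rw [hfun]
  have houter : deriv (fun t : ℝ => ∑ k ∈ Finset.range m, (k : ℝ) * t ^ k * x ^ (m - 1 - k)) z
      = ∑ k ∈ Finset.range m, (k : ℝ) * ((k : ℝ) * z ^ (k - 1)) * x ^ (m - 1 - k) := by
    refine HasDerivAt.deriv ?_
    apply HasDerivAt.fun_sum
    intro k _
    simpa [mul_comm, mul_assoc] using
      (((hasDerivAt_pow k z).const_mul (k : ℝ)).mul_const (x ^ (m - 1 - k)))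
  rw [houter]
  set c : ℕ → ℝ := fun k => x ^ (m - 1 - k) with hc
  set S0 : ℝ := ∑ k ∈ Finset.range m, z ^ k * c k with hS0
  set S1 : ℝ := ∑ k ∈ Finset.range m, (k : ℝ) * (z ^ k * c k) with hS1
  set S2 : ℝ := ∑ k ∈ Finset.range m, (k : ℝ) ^ 2 * (z ^ k * c k) with hS2
  have hd : ∀ k, 0 ≤ z ^ k * c k := fun k =>
    mul_nonneg (pow_nonneg hz.le k) (pow_nonneg hx.le _)
  have h1 : z * ∑ k ∈ Finset.range m, (k : ℝ) * ((k : ℝ) * z ^ (k - 1)) * c k = S2 := by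
    rw [Finset.mul_sum, hS2]
    refine Finset.sum_congr rfl fun k _ => ?_
    cases k with
    | zero => simp
    | succ n => simp [pow_succ]; ring
  have h2 : z * ∑ k ∈ Finset.range m, (k : ℝ) * z ^ (k - 1) * c k = S1 := by
    rw [Finset.mul_sum, hS1]
    refine Finset.sum_congr rfl fun k _ => ?_
    cases k with
    | zero => simp
    | succ n => simp [pow_succ]; ring
  have hCS : S1 ^ 2 ≤ S2 * S0 := by
    have := Finset.sum_mul_sq_le_sq_mul_sq (Finset.range m)
      (fun k => (k : ℝ) * Real.sqrt (z ^ k * c k)) (fun k => Real.sqrt (z ^ k * c k))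
    simp only [mul_pow, Real.sq_sqrt (hd _)] at this
    calc S1 ^ 2 = (∑ k ∈ Finset.range m,
          (k : ℝ) * Real.sqrt (z ^ k * c k) * Real.sqrt (z ^ k * c k)) ^ 2 := by
          congr 1
          refine Finset.sum_congr rfl fun k _ => ?_
          rw [mul_assoc, Real.mul_self_sqrt (hd k)]
      _ ≤ S2 * S0 := this
  set A : ℝ := ∑ k ∈ Finset.range m, (k : ℝ) * ((k : ℝ) * z ^ (k - 1)) * c k
  set B : ℝ := ∑ k ∈ Finset.range m, (k : ℝ) * z ^ (k - 1) * c k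
  have hA : A = S2 / z := by field_simp; linarith [h1]
  have hB : B = S1 / z := by field_simp; linarith [h2]
  have hBeq : (fun t : ℝ => ∑ k ∈ Finset.range m, (k : ℝ) * t ^ (k - 1) * x ^ (m - 1 - k)) z = B := rfl
  rw [hBeq, hA, hB]
  have heq : S2 / z * S0 - z * (S1 / z) ^ 2 = (S2 * S0 - S1 ^ 2) / z := by
    field_simp
  rw [heq]
  exact div_nonneg (by linarith) hz.le
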